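/- S is positively D-invariant for the system ṡ(t) = F(q(t)) s(t) + E(q(t)) δ(t) if and only if there exists τ > 0 such that for every vertex vᵢ ∈ {v₁,…,v_μ} of S, every vertex w_j ∈ {w₁,…,w_ν} of Q, and every vertex r_k ∈ {r₁,…,r_η} of D, one has vᵢ + τ·(F(w_j) vᵢ + E(w_j) r_k) ∈ S. -/

import Mathlib

open Set Matrix

/-- The affine matrix function `F(q) = F₀ + ∑ l, q_l F_l`. -/
noncomputable def matF {n p : ℕ} (F0 : Matrix (Fin n) (Fin n) ℝ)
    (F : Fin p → Matrix (Fin n) (Fin n) ℝ) (q : Fin p → ℝ) : Matrix (Fin n) (Fin n) ℝ :=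
  F0 + ∑ l, q l • F l

/-- The affine matrix function `E(q) = E₀ + ∑ l, q_l E_l`. -/
noncomputable def matE {n l p : ℕ} (E0 : Matrix (Fin n) (Fin l) ℝ)
    (E : Fin p → Matrix (Fin n) (Fin l) ℝ) (q : Fin p → ℝ) : Matrix (Fin n) (Fin l) ℝ :=
  E0 + ∑ i, q i • E i

/-- `S` is positively `D`-invariant for the system `ṡ(t) = F(q(t)) s(t) + E(q(t)) δ(t)`. -/
def PosDInvariant {n l p : ℕ} (F0 : Matrix (Fin n) (Fin n) ℝ)
    (F : Fin p → Matrix (Fin n) (Fin n) ℝ)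
    (E0 : Matrix (Fin n) (Fin l) ℝ) (E : Fin p → Matrix (Fin n) (Fin l) ℝ)
    (S : Set (Fin n → ℝ)) (Q : Set (Fin p → ℝ)) (D : Set (Fin l → ℝ)) : Prop :=
  ∀ q : ℝ → Fin p → ℝ, ContinuousOn q (Ici 0) → (∀ t ∈ Ici (0 : ℝ), q t ∈ Q) →
  ∀ δ : ℝ → Fin l → ℝ, ContinuousOn δ (Ici 0) → (∀ t ∈ Ici (0 : ℝ), δ t ∈ D) →
  ∀ s : ℝ → Fin n → ℝ,
    (∀ t ∈ Ici (0 : ℝ),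
      HasDerivAt s ((matF F0 F (q t)).mulVec (s t) + (matE E0 E (q t)).mulVec (δ t)) t) →
    s 0 ∈ S → ∀ t ∈ Ici (0 : ℝ), s t ∈ S



section AuxLemmas

open Filter Metric Topology NormedSpace

section Generic

variable {E : Type*} [AddCommGroup E] [Module ℝ E]

lemma mem_convexHull_range_iff {m : ℕ} (v : Fin m → E) (x : E) :
    x ∈ convexHull ℝ (Set.range v) ↔
      ∃ a : Fin m → ℝ, (∀ i, 0 ≤ a i) ∧ ∑ i, a i = 1 ∧ ∑ i, a i • v i = x := by
  rw [convexHull_range_eq_exists_affineCombination]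
  constructor
  · rintro ⟨s, ws, h0, h1, rfl⟩
    classical
    refine ⟨fun i => if i ∈ s then ws i else 0, fun i => ?_, ?_, ?_⟩
    · dsimp only; split
      · exact h0 _ ‹_›
      · exact le_refl 0
    · simp only [Finset.sum_ite_mem, Finset.univ_inter, h1]
    · rw [Finset.affineCombination_eq_linear_combination _ _ _ h1]
      simp only [ite_smul, zero_smul]
      rw [Finset.sum_ite_mem, Finset.univ_inter]
  · rintro ⟨a, h0, h1, rfl⟩
    exact ⟨Finset.univ, a, fun i _ => h0 i, h1,
      (Finset.affineCombination_eq_linear_combination _ _ _ h1)⟩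

/-- extending a coefficient function supported on `t` -/
lemma sum_subtype_eq_sum_univ {m : ℕ} (u : Fin m → E) (t : Finset (Fin m)) (c : Fin m → ℝ)
    (hc : ∀ i ∉ t, c i = 0) : ∑ i : Fin m, c i • u i = ∑ i ∈ t, c i • u i := by
  classical
  refine (Finset.sum_subset (Finset.subset_univ t) ?_).symm
  intro i _ hi
  rw [hc i hi, zero_smul]

variable {E : Type*} [AddCommGroup E] [Module ℝ E]

lemma cone_caratheodory {m : ℕ} (u : Fin m → E) (s : Finset (Fin m)) :
    ∀ (c : Fin m → ℝ), (∀ i, 0 ≤ c i) → (∀ i ∉ s, c i = 0) →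
    ∃ (t : Finset (Fin m)) (c' : Fin m → ℝ), LinearIndependent ℝ (fun i : t => u i) ∧
      (∀ i, 0 ≤ c' i) ∧ (∀ i ∉ t, c' i = 0) ∧ ∑ i, c' i • u i = ∑ i, c i • u i := by
  classical
  induction s using Finset.strongInduction with
  | _ s ih =>
  intro c hc0 hcs
  by_cases hli : LinearIndependent ℝ (fun i : s => u i)
  · exact ⟨s, c, hli, hc0, hcs, rfl⟩
  · obtain ⟨g, hg0, i0, hgi0⟩ := Fintype.not_linearIndependent_iff.1 hli
    set G1 : Fin m → ℝ := fun i => if h : i ∈ s then g ⟨i, h⟩ else 0 with hG1def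
    have hG1s : ∀ i ∉ s, G1 i = 0 := fun i hi => dif_neg hi
    have hG1at : ∀ i : s, G1 i = g i := fun i => dif_pos i.2
    have hG1sum : ∑ i, G1 i • u i = 0 := by
      rw [sum_subtype_eq_sum_univ u s G1 hG1s, ← Finset.sum_attach s (fun i => G1 i • u i)]
      rw [← hg0, Finset.univ_eq_attach]
      exact Finset.sum_congr rfl fun i _ => by rw [hG1at i]
    have key : ∀ G : Fin m → ℝ, (∀ i ∉ s, G i = 0) → (∑ i, G i • u i = 0) →
        (∃ i ∈ s, 0 < G i) →
        ∃ (t : Finset (Fin m)) (c' : Fin m → ℝ), LinearIndependent ℝ (fun i : t => u i) ∧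
          (∀ i, 0 ≤ c' i) ∧ (∀ i ∉ t, c' i = 0) ∧ ∑ i, c' i • u i = ∑ i, c i • u i := by
      rintro G hGs hGsum ⟨i1, hi1s, hi1pos⟩
      set P : Finset (Fin m) := s.filter (fun i => 0 < G i) with hP
      have hPne : P.Nonempty := ⟨i1, Finset.mem_filter.2 ⟨hi1s, hi1pos⟩⟩
      obtain ⟨i₀, hi₀P, hi₀min⟩ := Finset.exists_min_image P (fun i => c i / G i) hPne
      have hi₀s : i₀ ∈ s := (Finset.mem_filter.1 hi₀P).1
      have hGi₀ : 0 < G i₀ := by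
        have := (Finset.mem_filter.1 hi₀P).2; simpa using this
      set θ := c i₀ / G i₀ with hθdef
      have hθ0 : 0 ≤ θ := div_nonneg (hc0 i₀) hGi₀.le
      set c' : Fin m → ℝ := fun i => c i - θ * G i with hc'def
      have hc'0 : ∀ i, 0 ≤ c' i := by
        intro i
        rcases le_or_gt (G i) 0 with h | h
        · have : θ * G i ≤ 0 := mul_nonpos_of_nonneg_of_nonpos hθ0 h
          simp only [hc'def]; linarith [hc0 i]
        · have his : i ∈ s := by
            by_contra hns; rw [hGs i hns] at h; exact lt_irrefl _ h
          have hiP : i ∈ P := Finset.mem_filter.2 ⟨his, by simpa using h⟩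
          have hmin := hi₀min i hiP
          have : θ * G i ≤ c i := (le_div_iff₀ h).1 hmin
          simp only [hc'def]; linarith
      have hc'supp : ∀ i ∉ s.erase i₀, c' i = 0 := by
        intro i hi
        rw [Finset.mem_erase] at hi
        push_neg at hi
        by_cases his : i ∈ s
        · have : i = i₀ := by by_contra hne; exact hi hne his
          subst this
          simp only [hc'def, hθdef]
          field_simp
          ring
        · simp only [hc'def, hcs i his, hGs i his, mul_zero, sub_zero]
      have hc'sum : ∑ i, c' i • u i = ∑ i, c i • u i := by
        simp only [hc'def, sub_smul, Finset.sum_sub_distrib, mul_smul]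
        rw [← Finset.smul_sum, hGsum, smul_zero, sub_zero]
      have hss : s.erase i₀ ⊂ s := Finset.erase_ssubset hi₀s
      obtain ⟨t, c'', hli', h1, h2, h3⟩ := ih _ hss c' hc'0 hc'supp
      exact ⟨t, c'', hli', h1, h2, h3.trans hc'sum⟩
    rcases hgi0.lt_or_gt with hneg | hpos
    · refine key (-G1) (fun i hi => by simp [hG1s i hi])
        (by simpa using hG1sum) ⟨i0, i0.2, ?_⟩
      simp only [Pi.neg_apply, neg_pos]
      rw [hG1at i0]; exact hneg
    · refine key G1 hG1s hG1sum ⟨i0, i0.2, ?_⟩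
      rw [hG1at i0]; exact hpos


lemma seg_mem {E : Type*} [AddCommGroup E] [Module ℝ E] {S : Set E} (hconv : Convex ℝ S)
    {x d : E} {τ0 h : ℝ} (hx : x ∈ S) (hxd : x + τ0 • d ∈ S) (hτ0 : 0 < τ0)
    (h0 : 0 ≤ h) (hh : h ≤ τ0) : x + h • d ∈ S := by
  have hcomb := hconv hx hxd (a := 1 - h / τ0) (b := h / τ0)
    (by
      have : h / τ0 ≤ 1 := (div_le_one hτ0).2 hh
      linarith)
    (div_nonneg h0 hτ0.le) (by ring)
  have heq : (1 - h / τ0) • x + (h / τ0) • (x + τ0 • d) = x + h • d := by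
    rw [smul_add, smul_smul, div_mul_cancel₀ _ hτ0.ne']
    module
  rwa [heq] at hcomb


end Generic

lemma sum_mulVec {ν a b : ℕ} (M : Fin ν → Matrix (Fin a) (Fin b) ℝ) (x : Fin b → ℝ) :
    (∑ j, M j).mulVec x = ∑ j, (M j).mulVec x := by
  ext i
  simp only [Matrix.mulVec, dotProduct, Finset.sum_apply, Finset.sum_mul,
    Matrix.sum_apply]
  rw [Finset.sum_comm]

lemma matAffine {a b P ν : ℕ} (M0 : Matrix (Fin a) (Fin b) ℝ)
    (M : Fin P → Matrix (Fin a) (Fin b) ℝ) (w : Fin ν → Fin P → ℝ) (bw : Fin ν → ℝ)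
    (hb : ∑ j, bw j = 1) :
    M0 + ∑ l, (∑ j, bw j • w j) l • M l = ∑ j, bw j • (M0 + ∑ l, (w j) l • M l) := by
  have h1 : ∀ l, (∑ j, bw j • w j) l = ∑ j, bw j * w j l := by
    intro l; simp [Finset.sum_apply]
  simp only [h1, smul_add, Finset.sum_add_distrib, Finset.smul_sum, smul_smul, Finset.sum_smul]
  rw [Finset.sum_comm, ← Finset.sum_smul, hb, one_smul]


lemma isClosed_cone {m N : ℕ} (u : Fin m → (Fin N → ℝ)) :
    IsClosed {x : Fin N → ℝ | ∃ c : Fin m → ℝ, (∀ i, 0 ≤ c i) ∧ ∑ i, c i • u i = x} := by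
  classical
  have hpiece : ∀ t : Finset (Fin m), LinearIndependent ℝ (fun i : t => u i) →
      IsClosed ((fun c : (t → ℝ) => ∑ i : t, c i • u i) '' {c | ∀ i, 0 ≤ c i}) := by
    intro t hli
    set L : (t → ℝ) →ₗ[ℝ] (Fin N → ℝ) :=
      { toFun := fun c => ∑ i : t, c i • u i
        map_add' := by intro a b; simp [add_smul, Finset.sum_add_distrib]
        map_smul' := by intro r a; simp [mul_smul, Finset.smul_sum] } with hL
    have hinj : Function.Injective L := by
      intro a b hab
      have h0 : L (a - b) = 0 := by rw [map_sub, hab, sub_self]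
      have := Fintype.linearIndependent_iff.1 hli (a - b)
        (by simpa [hL, sub_smul, Finset.sum_sub_distrib] using h0)
      funext i; have := this i; simpa [sub_eq_zero] using this
    obtain ⟨K, -, hanti⟩ := (LinearMap.injective_iff_antilipschitz L).1 hinj
    have hcont : UniformContinuous L := (LinearMap.toContinuousLinearMap L).uniformContinuous
    have hmap : IsClosedMap L := (hanti.isClosedEmbedding hcont).isClosedMap
    have hcl : IsClosed {c : t → ℝ | ∀ i, 0 ≤ c i} := by
      have : {c : t → ℝ | ∀ i, 0 ≤ c i} = ⋂ i, {c | 0 ≤ c i} := by ext c; simp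
      rw [this]
      exact isClosed_iInter fun i => isClosed_le continuous_const (continuous_apply i)
    exact hmap _ hcl
  have heq : {x : Fin N → ℝ | ∃ c : Fin m → ℝ, (∀ i, 0 ≤ c i) ∧ ∑ i, c i • u i = x} =
      ⋃ t ∈ {t : Finset (Fin m) | LinearIndependent ℝ (fun i : t => u i)},
        (fun c : (t → ℝ) => ∑ i : t, c i • u i) '' {c | ∀ i, 0 ≤ c i} := by
    ext x
    simp only [mem_setOf_eq, mem_iUnion, mem_image]
    constructor
    · rintro ⟨c, hc0, rfl⟩
      obtain ⟨t, c', hli, h1, h2, h3⟩ := cone_caratheodory u Finset.univ c hc0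
        (fun i hi => absurd (Finset.mem_univ i) hi)
      refine ⟨t, hli, fun i : t => c' i, fun i => h1 i, ?_⟩
      rw [← h3, sum_subtype_eq_sum_univ u t c' h2, ← Finset.sum_attach t (fun i => c' i • u i),
        Finset.univ_eq_attach]
    · rintro ⟨t, hli, c, hc0, rfl⟩
      refine ⟨fun i => if h : i ∈ t then c ⟨i, h⟩ else 0, fun i => ?_, ?_⟩
      · dsimp only; split
        · exact hc0 _
        · exact le_refl 0
      · rw [sum_subtype_eq_sum_univ u t _ (fun i hi => dif_neg hi),
          ← Finset.sum_attach t (fun i => (if h : i ∈ t then c ⟨i, h⟩ else 0) • u i),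
          Finset.univ_eq_attach]
        exact Finset.sum_congr rfl fun i _ => by rw [dif_pos i.2]
  rw [heq]
  exact Set.Finite.isClosed_biUnion (Set.toFinite _) hpiece


lemma exists_global_sol {n : ℕ} (A : Matrix (Fin n) (Fin n) ℝ) (e x0 : Fin n → ℝ) :
    ∃ s : ℝ → Fin n → ℝ, s 0 = x0 ∧ ∀ t : ℝ, HasDerivAt s (A.mulVec (s t) + e) t := by
  set T : (Fin n → ℝ) →L[ℝ] (Fin n → ℝ) :=
    LinearMap.toContinuousLinearMap A.mulVecLin with hTdef
  have hTapp : ∀ y : Fin n → ℝ, A.mulVec y = T y := by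
    intro y; simp [hTdef, Matrix.mulVecLin_apply]
  set Φ : ℝ → ((Fin n → ℝ) →L[ℝ] (Fin n → ℝ)) := fun t => exp (t • T) with hΦdef
  have hΦd : ∀ t, HasDerivAt Φ (T * Φ t) t := fun t => hasDerivAt_exp_smul_const' T t
  have hΦc : Continuous Φ := by
    have : Continuous fun t : ℝ => t • T := (continuous_id.smul continuous_const)
    exact continuous_iff_continuousAt.2 fun t => (hΦd t).continuousAt
  set Ψ : ℝ → ((Fin n → ℝ) →L[ℝ] (Fin n → ℝ)) := fun t => ∫ u in (0:ℝ)..t, Φ u with hΨdef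
  have hΨd : ∀ t, HasDerivAt Ψ (Φ t) t := fun t =>
    intervalIntegral.integral_hasDerivAt_right (hΦc.intervalIntegrable _ _)
      hΦc.stronglyMeasurable.stronglyMeasurableAtFilter hΦc.continuousAt
  have hkey : ∀ t, T * Ψ t = Φ t - 1 := by
    have hdiff : ∀ t : ℝ, HasDerivAt (fun t => T * Ψ t - (Φ t - 1)) 0 t := by
      intro t
      have h1 : HasDerivAt (fun t => T * Ψ t) (T * Φ t) t := (hΨd t).const_mul T
      have h2 : HasDerivAt (fun t => Φ t - 1) (T * Φ t) t := (hΦd t).sub_const 1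
      have := h1.sub h2; rw [sub_self] at this; exact this
    have hconst := is_const_of_deriv_eq_zero
      (fun t => (hdiff t).differentiableAt) (fun t => (hdiff t).deriv)
    intro t
    have h0 := hconst t 0
    have hΨ0 : Ψ 0 = 0 := intervalIntegral.integral_same
    have hΦ0 : Φ 0 = 1 := by simp [hΦdef, exp_zero]
    rw [hΨ0, hΦ0] at h0
    simp only [mul_zero, sub_self, sub_zero] at h0
    exact sub_eq_zero.1 h0
  refine ⟨fun t => Φ t x0 + (Ψ t) e, ?_, ?_⟩
  · have hΨ0 : Ψ 0 = 0 := intervalIntegral.integral_same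
    have hΦ0 : Φ 0 = 1 := by simp [hΦdef, exp_zero]
    simp [hΨ0, hΦ0]
  · intro t
    have h1 : HasDerivAt (fun t => Φ t x0) ((T * Φ t) x0) t := by
      have := (hΦd t).clm_apply (hasDerivAt_const t x0)
      simpa using this
    have h2 : HasDerivAt (fun t => (Ψ t) e) ((Φ t) e) t := by
      have := (hΨd t).clm_apply (hasDerivAt_const t e)
      simpa using this
    have hsum := h1.add h2
    refine hsum.congr_deriv ?_
    symm
    rw [hTapp, map_add]
    have hTΨ : T ((Ψ t) e) = (Φ t) e - e := by
      have : (T * Ψ t) e = (Φ t - 1) e := by rw [hkey t]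
      simpa [ContinuousLinearMap.mul_apply, ContinuousLinearMap.sub_apply,
        ContinuousLinearMap.one_apply] using this
    rw [show T ((Φ t) x0) = (T * Φ t) x0 from rfl, hTΨ]
    abel


lemma euler_step_mem {n l p μ ν η : ℕ}
    (F0 : Matrix (Fin n) (Fin n) ℝ) (F : Fin p → Matrix (Fin n) (Fin n) ℝ)
    (E0 : Matrix (Fin n) (Fin l) ℝ) (E : Fin p → Matrix (Fin n) (Fin l) ℝ)
    (v : Fin μ → Fin n → ℝ) (w : Fin ν → Fin p → ℝ) (r : Fin η → Fin l → ℝ)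
    {τ : ℝ} (hτ : 0 < τ)
    (hvert : ∀ (i : Fin μ) (j : Fin ν) (k : Fin η),
      v i + τ • ((matF F0 F (w j)).mulVec (v i) + (matE E0 E (w j)).mulVec (r k))
        ∈ convexHull ℝ (Set.range v))
    {x : Fin n → ℝ} {qq : Fin p → ℝ} {dd : Fin l → ℝ} {h : ℝ}
    (hx : x ∈ convexHull ℝ (Set.range v)) (hq : qq ∈ convexHull ℝ (Set.range w))
    (hd : dd ∈ convexHull ℝ (Set.range r)) (h0 : 0 ≤ h) (hh : h ≤ τ) :
    x + h • ((matF F0 F qq).mulVec x + (matE E0 E qq).mulVec dd)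
      ∈ convexHull ℝ (Set.range v) := by
  obtain ⟨a, ha0, ha1, hxa⟩ := (mem_convexHull_range_iff v x).1 hx
  obtain ⟨b, hb0, hb1, hqb⟩ := (mem_convexHull_range_iff w qq).1 hq
  obtain ⟨c, hc0, hc1, hdc⟩ := (mem_convexHull_range_iff r dd).1 hd
  set G : Fin ν → Matrix (Fin n) (Fin n) ℝ := fun j => matF F0 F (w j) with hGdef
  set H : Fin ν → Matrix (Fin n) (Fin l) ℝ := fun j => matE E0 E (w j) with hHdef
  -- linearity in the vector argument
  have hGx : ∀ j, (G j).mulVec x = ∑ i, a i • (G j).mulVec (v i) := by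
    intro j
    rw [← hxa, ← Matrix.mulVecLin_apply, map_sum]
    simp [Matrix.mulVecLin_apply]
  have hHd : ∀ j, (H j).mulVec dd = ∑ k, c k • (H j).mulVec (r k) := by
    intro j
    rw [← hdc, ← Matrix.mulVecLin_apply, map_sum]
    simp [Matrix.mulVecLin_apply]
  -- affine combination in the parameter argument
  have hFq : (matF F0 F qq).mulVec x = ∑ j, b j • (G j).mulVec x := by
    rw [← hqb]
    show (matF F0 F (∑ j, b j • w j)).mulVec x = _
    rw [matF, matAffine F0 F w b hb1, sum_mulVec]
    simp only [Matrix.smul_mulVec, hGdef, matF]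
  have hEq : (matE E0 E qq).mulVec dd = ∑ j, b j • (H j).mulVec dd := by
    rw [← hqb]
    show (matE E0 E (∑ j, b j • w j)).mulVec dd = _
    rw [matE, matAffine E0 E w b hb1, _root_.sum_mulVec]
    simp only [Matrix.smul_mulVec, hHdef, matE]
  -- the case h = τ
  have main : x + τ • ((matF F0 F qq).mulVec x + (matE E0 E qq).mulVec dd)
      ∈ convexHull ℝ (Set.range v) := by
    have hT1 : ∑ i, ∑ j, ∑ k, (a i * b j * c k) • v i = x := by
      simp only [← Finset.sum_smul, ← Finset.mul_sum, hc1, hb1, mul_one]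
      exact hxa
    have hT2 : ∑ i, ∑ j, ∑ k, (a i * b j * c k) • τ • (G j).mulVec (v i)
        = τ • (matF F0 F qq).mulVec x := by
      have inner : ∀ i j (y : Fin n → ℝ),
          ∑ k, (a i * b j * c k) • τ • y = τ • b j • a i • y := by
        intro i j y
        rw [← Finset.sum_smul, ← Finset.mul_sum, hc1, mul_one]
        simp only [smul_smul]
        congr 1; ring
      simp only [inner]
      rw [Finset.sum_comm, hFq]
      simp only [hGx, Finset.smul_sum]
    have hT3 : ∑ i, ∑ j, ∑ k, (a i * b j * c k) • τ • (H j).mulVec (r k)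
        = τ • (matE E0 E qq).mulVec dd := by
      have inner : ∀ i j, ∑ k, (a i * b j * c k) • τ • (H j).mulVec (r k)
          = a i • b j • τ • (H j).mulVec dd := by
        intro i j
        rw [hHd j, Finset.smul_sum, Finset.smul_sum, Finset.smul_sum]
        refine Finset.sum_congr rfl fun k _ => ?_
        simp only [smul_smul]
        congr 1; ring
      simp only [inner]
      rw [Finset.sum_comm]
      have collapse : ∀ j, ∑ i, a i • b j • τ • (H j).mulVec dd
          = τ • b j • (H j).mulVec dd := by
        intro j
        rw [← Finset.sum_smul, ha1, one_smul]
        simp only [smul_smul]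
        congr 1; ring
      simp only [collapse]
      rw [hEq, Finset.smul_sum]
    have hsum : ∑ t : Fin μ × Fin ν × Fin η,
        (a t.1 * b t.2.1 * c t.2.2) •
          (v t.1 + τ • ((G t.2.1).mulVec (v t.1) + (H t.2.1).mulVec (r t.2.2)))
        = x + τ • ((matF F0 F qq).mulVec x + (matE E0 E qq).mulVec dd) := by
      rw [Fintype.sum_prod_type]
      simp only [Fintype.sum_prod_type, smul_add, Finset.sum_add_distrib]
      rw [hT1, hT2, hT3]
    have hW1 : ∑ t : Fin μ × Fin ν × Fin η, (a t.1 * b t.2.1 * c t.2.2) = 1 := by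
      rw [Fintype.sum_prod_type]
      simp only [Fintype.sum_prod_type, ← Finset.mul_sum, hc1, hb1, ha1, mul_one]
    rw [← hsum]
    refine Convex.sum_mem (convex_convexHull ℝ _) (fun t _ => ?_) hW1 (fun t _ => ?_)
    · exact mul_nonneg (mul_nonneg (ha0 _) (hb0 _)) (hc0 _)
    · exact hvert t.1 t.2.1 t.2.2
  -- interpolate between x (h = 0) and the h = τ point
  have hxmem := hx
  set D := (matF F0 F qq).mulVec x + (matE E0 E qq).mulVec dd with hDdef
  have hcvx := convex_convexHull ℝ (Set.range v)
  have hcomb := hcvx hxmem main (a := 1 - h / τ) (b := h / τ)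
    (by
      have : h / τ ≤ 1 := (div_le_one hτ).2 hh
      linarith)
    (div_nonneg h0 hτ.le) (by ring)
  have : (1 - h / τ) • x + (h / τ) • (x + τ • D) = x + h • D := by
    have hτne : τ ≠ 0 := hτ.ne'
    rw [smul_add, smul_smul, div_mul_cancel₀ _ hτne]
    module
  rwa [this] at hcomb


/-- Uniform operator bound for `matF` over the polytope `Q`. -/
lemma matF_mulVec_bound {n p ν : ℕ}
    (F0 : Matrix (Fin n) (Fin n) ℝ) (F : Fin p → Matrix (Fin n) (Fin n) ℝ)
    (w : Fin ν → Fin p → ℝ) :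
    ∃ K : ℝ, 0 ≤ K ∧ ∀ qq ∈ convexHull ℝ (Set.range w), ∀ u : Fin n → ℝ,
      ‖(matF F0 F qq).mulVec u‖ ≤ K * ‖u‖ := by
  classical
  set T : Fin ν → (Fin n → ℝ) →L[ℝ] (Fin n → ℝ) :=
    fun j => LinearMap.toContinuousLinearMap (matF F0 F (w j)).mulVecLin with hT
  refine ⟨∑ j, ‖T j‖, Finset.sum_nonneg fun j _ => norm_nonneg _, ?_⟩
  intro qq hq u
  obtain ⟨b, hb0, hb1, hqb⟩ := (mem_convexHull_range_iff w qq).1 hq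
  have hTapp : ∀ j (y : Fin n → ℝ), (matF F0 F (w j)).mulVec y = T j y := by
    intro j y
    simp [hT, Matrix.mulVecLin_apply]
  have hdecomp : (matF F0 F qq).mulVec u = ∑ j, b j • (matF F0 F (w j)).mulVec u := by
    rw [← hqb]
    show (matF F0 F (∑ j, b j • w j)).mulVec u = _
    rw [matF, matAffine F0 F w b hb1, sum_mulVec]
    simp only [Matrix.smul_mulVec, matF]
  rw [hdecomp]
  calc ‖∑ j, b j • (matF F0 F (w j)).mulVec u‖
      ≤ ∑ j, ‖b j • (matF F0 F (w j)).mulVec u‖ := norm_sum_le _ _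
    _ ≤ ∑ j, ‖T j‖ * ‖u‖ := by
        refine Finset.sum_le_sum fun j _ => ?_
        rw [norm_smul, hTapp, Real.norm_eq_abs, abs_of_nonneg (hb0 j)]
        have hble : b j ≤ 1 := by
          have := Finset.single_le_sum (f := b) (fun i _ => hb0 i) (Finset.mem_univ j)
          linarith [hb1 ▸ this]
        calc b j * ‖T j u‖ ≤ 1 * ‖T j u‖ :=
              mul_le_mul_of_nonneg_right hble (norm_nonneg _)
          _ = ‖T j u‖ := one_mul _
          _ ≤ ‖T j‖ * ‖u‖ := (T j).le_opNorm u
    _ = (∑ j, ‖T j‖) * ‖u‖ := (Finset.sum_mul _ _ _).symm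


lemma backward_dir {n l p μ ν η : ℕ}
    (F0 : Matrix (Fin n) (Fin n) ℝ) (F : Fin p → Matrix (Fin n) (Fin n) ℝ)
    (E0 : Matrix (Fin n) (Fin l) ℝ) (E : Fin p → Matrix (Fin n) (Fin l) ℝ)
    (v : Fin μ → Fin n → ℝ) (w : Fin ν → Fin p → ℝ) (r : Fin η → Fin l → ℝ)
    (hS0 : (0 : Fin n → ℝ) ∈ convexHull ℝ (Set.range v))
    {τ : ℝ} (hτ : 0 < τ)
    (hvert : ∀ (i : Fin μ) (j : Fin ν) (k : Fin η),
      v i + τ • ((matF F0 F (w j)).mulVec (v i) + (matE E0 E (w j)).mulVec (r k))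
        ∈ convexHull ℝ (Set.range v)) :
    PosDInvariant F0 F E0 E (convexHull ℝ (Set.range v)) (convexHull ℝ (Set.range w))
      (convexHull ℝ (Set.range r)) := by
  intro q hqc hqQ δ hδc hδD s hsd hs0 t ht
  obtain ⟨K, hK0, hKb⟩ := matF_mulVec_bound F0 F w
  set S := convexHull ℝ (Set.range v) with hSdef
  have hScomp : IsCompact S := (Set.finite_range v).isCompact_convexHull (𝕜 := ℝ)
  have hSclosed : IsClosed S := hScomp.isClosed
  have hSne : S.Nonempty := ⟨0, hS0⟩
  have ht0 : (0 : ℝ) ≤ t := ht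
  set g : ℝ → ℝ := fun x => infDist (s x) S with hgdef
  have hscont : ContinuousOn s (Icc 0 t) := fun x hx =>
    ((hsd x hx.1).continuousAt).continuousWithinAt
  have hgcont : ContinuousOn g (Icc 0 t) :=
    (continuous_infDist_pt S).comp_continuousOn hscont
  have hmain : ∀ x ∈ Icc (0:ℝ) t, g x ≤ gronwallBound 0 K 0 (x - 0) := by
    apply le_gronwallBound_of_liminf_deriv_right_le (f' := fun x => K * g x) hgcont
    · -- liminf condition
      intro x hx rr hrr
      have hx0 : (0:ℝ) ≤ x := hx.1
      obtain ⟨y, hyS, hyd⟩ := hScomp.exists_infDist_eq_dist hSne (s x)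
      have hder : HasDerivAt s
          ((matF F0 F (q x)).mulVec (s x) + (matE E0 E (q x)).mulVec (δ x)) x := hsd x hx0
      set vd := (matF F0 F (q x)).mulVec (s x) + (matE E0 E (q x)).mulVec (δ x) with hvd
      have htend : Tendsto (fun z => ‖z - x‖⁻¹ * ‖s z - s x - (z - x) • vd‖) (𝓝 x) (𝓝 0) :=
        hasDerivAt_iff_tendsto.1 hder
      have hev1 : ∀ᶠ z in 𝓝[>] x, ‖z - x‖⁻¹ * ‖s z - s x - (z - x) • vd‖ < rr - K * g x := by
        apply (htend.mono_left nhdsWithin_le_nhds).eventually_lt_const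
        linarith
      have hev2 : ∀ᶠ z in 𝓝[>] x, z ∈ Ioo x (x + τ) :=
        Ioo_mem_nhdsGT_of_mem ⟨le_refl x, by linarith⟩
      refine ((hev1.and hev2).mono ?_).frequently
      rintro z ⟨h1, h2⟩
      have hzx : 0 < z - x := by have := h2.1; linarith
      have hzτ : z - x ≤ τ := by have := h2.2; linarith
      have hyE : y + (z - x) • ((matF F0 F (q x)).mulVec y + (matE E0 E (q x)).mulVec (δ x))
          ∈ S := euler_step_mem F0 F E0 E v w r hτ hvert hyS (hqQ x hx0) (hδD x hx0)
            hzx.le hzτ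
      have hAsub : (matF F0 F (q x)).mulVec (s x) - (matF F0 F (q x)).mulVec y
          = (matF F0 F (q x)).mulVec (s x - y) := by
        simp only [← Matrix.mulVecLin_apply, ← map_sub]
      have hKbound : ‖(matF F0 F (q x)).mulVec (s x - y)‖ ≤ K * g x := by
        have := hKb (q x) (hqQ x hx0) (s x - y)
        have hnorm : ‖s x - y‖ = g x := by rw [← dist_eq_norm, ← hyd]
        rw [hnorm] at this; exact this
      have hgz : g z ≤ ‖s z - s x - (z - x) • vd‖ + g x + (z - x) * (K * g x) := by
        have h1' : g z ≤ dist (s z)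
            (y + (z - x) • ((matF F0 F (q x)).mulVec y + (matE E0 E (q x)).mulVec (δ x))) :=
          infDist_le_dist_of_mem hyE
        rw [dist_eq_norm] at h1'
        have hid : s z - (y + (z - x) • ((matF F0 F (q x)).mulVec y
              + (matE E0 E (q x)).mulVec (δ x)))
            = (s z - s x - (z - x) • vd) + (s x - y)
              + (z - x) • ((matF F0 F (q x)).mulVec (s x - y)) := by
          rw [← hAsub, hvd]
          module
        rw [hid] at h1'
        have h2' : ‖(s z - s x - (z - x) • vd) + (s x - y)
              + (z - x) • ((matF F0 F (q x)).mulVec (s x - y))‖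
            ≤ ‖s z - s x - (z - x) • vd‖ + ‖s x - y‖
              + ‖(z - x) • ((matF F0 F (q x)).mulVec (s x - y))‖ := norm_add₃_le
        have h3' : ‖(z - x) • ((matF F0 F (q x)).mulVec (s x - y))‖ ≤ (z - x) * (K * g x) := by
          rw [norm_smul, Real.norm_eq_abs, abs_of_pos hzx]
          exact mul_le_mul_of_nonneg_left hKbound hzx.le
        have hnorm : ‖s x - y‖ = g x := by rw [← dist_eq_norm, ← hyd]
        rw [hnorm] at h2'
        linarith
      show (z - x)⁻¹ * (g z - g x) < rr
      have hnormz : ‖z - x‖ = z - x := by rw [Real.norm_eq_abs, abs_of_pos hzx]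
      rw [hnormz] at h1
      have key : (z - x)⁻¹ * (g z - g x)
          ≤ (z - x)⁻¹ * ‖s z - s x - (z - x) • vd‖ + K * g x := by
        have hle : g z - g x ≤ ‖s z - s x - (z - x) • vd‖ + (z - x) * (K * g x) := by
          linarith
        calc (z - x)⁻¹ * (g z - g x)
            ≤ (z - x)⁻¹ * (‖s z - s x - (z - x) • vd‖ + (z - x) * (K * g x)) :=
              mul_le_mul_of_nonneg_left hle (inv_nonneg.2 hzx.le)
          _ = (z - x)⁻¹ * ‖s z - s x - (z - x) • vd‖ + K * g x := by
              field_simp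
      linarith
    · exact le_of_eq (infDist_zero_of_mem hs0)
    · intro x _; simp
  have := hmain t ⟨ht0, le_refl t⟩
  rw [sub_zero, gronwallBound_ε0_δ0] at this
  have hg0 : g t = 0 := le_antisymm this infDist_nonneg
  exact (hSclosed.mem_iff_infDist_zero hSne).2 hg0


lemma forward_dir {n l p μ ν η : ℕ}
    (F0 : Matrix (Fin n) (Fin n) ℝ) (F : Fin p → Matrix (Fin n) (Fin n) ℝ)
    (E0 : Matrix (Fin n) (Fin l) ℝ) (E : Fin p → Matrix (Fin n) (Fin l) ℝ)
    (v : Fin μ → Fin n → ℝ) (w : Fin ν → Fin p → ℝ) (r : Fin η → Fin l → ℝ)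
    (hinv : PosDInvariant F0 F E0 E (convexHull ℝ (Set.range v))
      (convexHull ℝ (Set.range w)) (convexHull ℝ (Set.range r))) :
    ∃ τ : ℝ, 0 < τ ∧ ∀ (i : Fin μ) (j : Fin ν) (k : Fin η),
      v i + τ • ((matF F0 F (w j)).mulVec (v i) + (matE E0 E (w j)).mulVec (r k))
        ∈ convexHull ℝ (Set.range v) := by
  classical
  set S := convexHull ℝ (Set.range v) with hSdef
  have hconv : Convex ℝ S := convex_convexHull ℝ _
  have H : ∀ t : Fin μ × Fin ν × Fin η, ∃ τ' : ℝ, 0 < τ' ∧ ∀ h, 0 ≤ h → h ≤ τ' →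
      v t.1 + h • ((matF F0 F (w t.2.1)).mulVec (v t.1)
        + (matE E0 E (w t.2.1)).mulVec (r t.2.2)) ∈ S := by
    rintro ⟨i, j, k⟩
    dsimp only
    set A := matF F0 F (w j) with hA
    set e := (matE E0 E (w j)).mulVec (r k) with he
    set d := A.mulVec (v i) + e with hd
    obtain ⟨s, hs0, hsd⟩ := exists_global_sol A e (v i)
    have hvi : v i ∈ S := subset_convexHull ℝ _ (Set.mem_range_self i)
    have hmem : ∀ t ∈ Ici (0:ℝ), s t ∈ S := by
      apply hinv (fun _ => w j) continuousOn_const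
        (fun t _ => subset_convexHull ℝ _ (Set.mem_range_self j))
        (fun _ => r k) continuousOn_const
        (fun t _ => subset_convexHull ℝ _ (Set.mem_range_self k)) s
        (fun t _ => hsd t)
      rw [hs0]; exact hvi
    have hd0 : HasDerivAt s d 0 := by
      have := hsd 0
      rwa [hs0] at this
    -- slope limit
    have hslope : Tendsto (slope s 0) (𝓝[>] (0:ℝ)) (𝓝 d) :=
      (hasDerivAt_iff_tendsto_slope.1 hd0).mono_left
        (nhdsWithin_mono 0 (fun z hz => (ne_of_gt hz : z ≠ 0)))
    set C := {x : Fin n → ℝ | ∃ c : Fin μ → ℝ, (∀ i', 0 ≤ c i') ∧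
      ∑ i', c i' • (v i' - v i) = x} with hC
    have hCclosed : IsClosed C := isClosed_cone (fun i' => v i' - v i)
    have hslopemem : ∀ᶠ t in 𝓝[>] (0:ℝ), slope s 0 t ∈ C := by
      filter_upwards [self_mem_nhdsWithin] with t ht
      have ht0 : (0:ℝ) < t := ht
      obtain ⟨a, ha0, ha1, hsa⟩ := (mem_convexHull_range_iff v (s t)).1 (hmem t ht0.le)
      refine ⟨fun i' => t⁻¹ * a i', fun i' => mul_nonneg (inv_nonneg.2 ht0.le) (ha0 i'), ?_⟩
      have hst : ∑ i', a i' • (v i' - v i) = s t - v i := by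
        simp only [smul_sub, Finset.sum_sub_distrib, hsa, ← Finset.sum_smul, ha1, one_smul]
      rw [slope_def_module]
      simp only [mul_smul, ← Finset.smul_sum, hst, hs0, sub_zero]
    have hdC : d ∈ C := hCclosed.mem_of_tendsto hslope hslopemem
    obtain ⟨c, hc0, hcd⟩ := hdC
    set M := ∑ i', c i' with hM
    have hM0 : 0 ≤ M := Finset.sum_nonneg fun i' _ => hc0 i'
    rcases eq_or_lt_of_le hM0 with hMeq | hMpos
    · -- all coefficients vanish, `d = 0`
      have hcall : ∀ i', c i' = 0 := by
        intro i'
        have := (Finset.sum_eq_zero_iff_of_nonneg (fun i'' _ => hc0 i'')).1 hMeq.symm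
        exact this i' (Finset.mem_univ i')
      have hdz : d = 0 := by
        rw [← hcd]
        simp [hcall]
      exact ⟨1, one_pos, fun h h0 hh => by rw [hdz]; simpa using hvi⟩
    · -- `v i + M⁻¹ • d ∈ S`
      have hz : v i + M⁻¹ • d ∈ S := by
        rw [hSdef, mem_convexHull_range_iff]
        refine ⟨fun i' => M⁻¹ * c i', fun i' => mul_nonneg (inv_nonneg.2 hM0) (hc0 i'), ?_, ?_⟩
        · rw [← Finset.mul_sum, ← hM, inv_mul_cancel₀ hMpos.ne']
        · rw [← hcd]
          simp only [mul_smul, ← Finset.smul_sum]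
          simp only [smul_sub, Finset.sum_sub_distrib, ← Finset.sum_smul, ← hM]
          rw [smul_smul, inv_mul_cancel₀ hMpos.ne', one_smul]
          module
      exact ⟨M⁻¹, inv_pos.2 hMpos, fun h h0 hh => seg_mem hconv hvi hz (inv_pos.2 hMpos) h0 hh⟩
  choose τf hτfpos hτfmem using H
  by_cases hne : Nonempty (Fin μ × Fin ν × Fin η)
  · set τ := Finset.univ.inf' (Finset.univ_nonempty) τf with hτ
    refine ⟨τ, ?_, ?_⟩
    · rw [hτ, Finset.lt_inf'_iff]
      exact fun t _ => hτfpos t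
    · intro i j k
      have hle : τ ≤ τf (i, j, k) := Finset.inf'_le _ (Finset.mem_univ _)
      have hpos : 0 < τ := by
        rw [hτ, Finset.lt_inf'_iff]; exact fun t _ => hτfpos t
      exact hτfmem (i, j, k) τ hpos.le hle
  · refine ⟨1, one_pos, fun i j k => absurd ⟨(i, j, k)⟩ hne⟩

end AuxLemmas

/-- Corollary 2: `S` is positively `D`-invariant iff there exists `τ > 0` such that
the Euler step from every vertex of `S`, for every vertex of `Q` and `D`, stays in `S`. -/
theorem posDInvariant_iff_euler_step {n l p μ ν η : ℕ}
    (F0 : Matrix (Fin n) (Fin n) ℝ) (F : Fin p → Matrix (Fin n) (Fin n) ℝ)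
    (E0 : Matrix (Fin n) (Fin l) ℝ) (E : Fin p → Matrix (Fin n) (Fin l) ℝ)
    (v : Fin μ → Fin n → ℝ) (w : Fin ν → Fin p → ℝ) (r : Fin η → Fin l → ℝ)
    (S : Set (Fin n → ℝ)) (Q : Set (Fin p → ℝ)) (D : Set (Fin l → ℝ))
    (hS : S = convexHull ℝ (Set.range v))
    (hQ : Q = convexHull ℝ (Set.range w))
    (hD : D = convexHull ℝ (Set.range r))
    (hSint : (interior S).Nonempty) (hS0 : (0 : Fin n → ℝ) ∈ S) :
    PosDInvariant F0 F E0 E S Q D ↔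
      ∃ τ : ℝ, 0 < τ ∧ ∀ (i : Fin μ) (j : Fin ν) (k : Fin η),
        v i + τ • ((matF F0 F (w j)).mulVec (v i) + (matE E0 E (w j)).mulVec (r k)) ∈ S := by
  subst hS hQ hD
  constructor
  · intro hinv
    exact forward_dir F0 F E0 E v w r hinv
  · rintro ⟨τ, hτ, hvert⟩
    exact backward_dir F0 F E0 E v w r hS0 hτ hvert
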